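/- Let c > 1/2, C* > 0, and t* ≥ 1. There exists a time-independent constant K > 0 such that for all t ≥ t*, the quantity I₄(t) := t^{−4c} · ∫_{u=t*}^{t} ∫_{s=u}^{t} ∫_{w=s}^{t} ∫_{r=w}^{t} r^{c−2} · s^{2c−2} · w^{c−2} · e^{−C* r + 2C* u − C* s} dr dw ds du satisfies: I₄(t) ≤ K/t⁵ if c > 5/4; I₄(t) ≤ K(1 + log t)/t⁵ if c = 5/4; and I₄(t) ≤ K/t^{4c} if 1/2 < c < 5/4. -/

import Mathlib

open MeasureTheory Set

/-- Comparison of interval integrals that does not require integrability of `F`. -/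
lemma integral_le_of_le' {a b : ℝ} (hab : a ≤ b) {F G : ℝ → ℝ}
    (hG : IntervalIntegrable G volume a b)
    (h0 : ∀ x ∈ Set.Icc a b, 0 ≤ F x)
    (hFG : ∀ x ∈ Set.Icc a b, F x ≤ G x) :
    (∫ x in a..b, F x) ≤ ∫ x in a..b, G x := by
  by_cases hF : IntervalIntegrable F volume a b
  · exact intervalIntegral.integral_mono_on hab hF hG hFG
  · rw [intervalIntegral.integral_undef hF]
    exact intervalIntegral.integral_nonneg hab fun x hx => (h0 x hx).trans (hFG x hx)

lemma exp_shift_cont (k u : ℝ) : Continuous (fun x : ℝ => Real.exp (-(k * (x - u)))) := by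
  fun_prop

lemma exp_shift_integral (k u a b : ℝ) (hk : 0 < k) :
    (∫ x in a..b, Real.exp (-(k * (x - u)))) =
      (Real.exp (-(k * (a - u))) - Real.exp (-(k * (b - u)))) / k := by
  have hderiv : ∀ x ∈ Set.uIcc a b,
      HasDerivAt (fun y => -(Real.exp (-(k * (y - u))) / k)) (Real.exp (-(k * (x - u)))) x := by
    intro x _
    have h1 : HasDerivAt (fun y : ℝ => -(k * (y - u))) (-k) x := by
      have h := (((hasDerivAt_id x).sub_const u).const_mul k).neg
      rw [mul_one] at h
      exact h
    have h3 := (h1.exp.div_const k).neg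
    rw [mul_neg, neg_div, neg_neg, mul_div_cancel_right₀ _ hk.ne'] at h3
    exact h3
  rw [intervalIntegral.integral_eq_sub_of_hasDerivAt hderiv
    ((exp_shift_cont k u).intervalIntegrable a b)]
  field_simp
  ring

lemma exp_shift_integral_le (k u a b : ℝ) (hk : 0 < k) :
    (∫ x in a..b, Real.exp (-(k * (x - u)))) ≤ Real.exp (-(k * (a - u))) / k := by
  rw [exp_shift_integral k u a b hk]
  have := (Real.exp_pos (-(k * (b - u)))).le
  gcongr
  linarith

/-- Polynomial growth is beaten by any exponential, uniformly along `1 ≤ u ≤ r`. -/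
lemma poly_exp_bound (a lam : ℝ) (hlam : 0 < lam) :
    ∃ C : ℝ, 1 ≤ C ∧ ∀ u r : ℝ, 1 ≤ u → u ≤ r →
      r ^ a ≤ C * u ^ a * Real.exp (lam * (r - u)) := by
  rcases le_or_gt a 0 with ha | ha
  · refine ⟨1, le_refl 1, fun u r hu hur => ?_⟩
    have hu0 : 0 < u := lt_of_lt_of_le one_pos hu
    have h1 : r ^ a ≤ u ^ a := Real.rpow_le_rpow_of_nonpos hu0 hur ha
    have h2 : (1:ℝ) ≤ Real.exp (lam * (r - u)) := by
      rw [← Real.exp_zero]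
      exact Real.exp_le_exp.mpr (by nlinarith)
    nlinarith [Real.rpow_nonneg hu0.le a]
  · set N : ℕ := max ⌈a⌉₊ ⌈lam⌉₊ + 1 with hN
    have hNa : a ≤ (N : ℝ) := by
      have := Nat.le_ceil a
      have h2 : (⌈a⌉₊ : ℝ) ≤ N := by
        have : ⌈a⌉₊ ≤ N := le_trans (le_max_left _ _) (Nat.le_succ _)
        exact_mod_cast this
      linarith
    have hNlam : lam ≤ (N : ℝ) := by
      have := Nat.le_ceil lam
      have h2 : (⌈lam⌉₊ : ℝ) ≤ N := by
        have : ⌈lam⌉₊ ≤ N := le_trans (le_max_right _ _) (Nat.le_succ _)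
        exact_mod_cast this
      linarith
    have hN0 : 0 < (N : ℝ) := lt_of_lt_of_le hlam hNlam
    refine ⟨((N : ℝ) / lam) ^ N, one_le_pow₀ ((one_le_div hlam).mpr hNlam), ?_⟩
    intro u r hu hur
    have hu0 : 0 < u := lt_of_lt_of_le one_pos hu
    have hr0 : 0 < r := lt_of_lt_of_le hu0 hur
    have hx : 0 ≤ r - u := by linarith
    -- r^a = u^a * (r/u)^a
    have hsplit : r ^ a = u ^ a * (r / u) ^ a := by
      rw [← Real.mul_rpow hu0.le (by positivity)]
      rw [mul_div_cancel₀ _ (ne_of_gt hu0)]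
    have hq1 : (1:ℝ) ≤ r / u := (one_le_div hu0).mpr hur
    have h1 : (r / u) ^ a ≤ (r / u) ^ (N : ℝ) :=
      Real.rpow_le_rpow_of_exponent_le hq1 hNa
    have h2 : (r / u) ^ (N : ℝ) = (r / u) ^ N := Real.rpow_natCast _ _
    have h3 : r / u ≤ 1 + (r - u) := by
      rw [div_le_iff₀ hu0]
      nlinarith
    have h4 : (r / u) ^ N ≤ (1 + (r - u)) ^ N :=
      pow_le_pow_left₀ (by positivity) h3 N
    have h5 : (1 + (r - u)) ^ N ≤ ((N : ℝ) / lam) ^ N * Real.exp (lam * (r - u)) := by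
      have hb : 1 + (r - u) ≤ ((N : ℝ) / lam) * (1 + lam * (r - u) / N) := by
        have : ((N : ℝ) / lam) * (1 + lam * (r - u) / N) = (N : ℝ) / lam + (r - u) := by
          field_simp
        rw [this]
        have : (1:ℝ) ≤ (N : ℝ) / lam := (one_le_div hlam).mpr hNlam
        linarith
      have hb2 : (1 + (r - u)) ^ N ≤ (((N : ℝ) / lam) * (1 + lam * (r - u) / N)) ^ N :=
        pow_le_pow_left₀ (by positivity) hb N
      have hb3 : (1 + lam * (r - u) / N) ^ N ≤ Real.exp (lam * (r - u)) := by
        have he : 1 + lam * (r - u) / N ≤ Real.exp (lam * (r - u) / N) := by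
          have := Real.add_one_le_exp (lam * (r - u) / N)
          linarith
        have := pow_le_pow_left₀ (by positivity) he N
        refine this.trans (le_of_eq ?_)
        rw [← Real.exp_nat_mul]
        congr 1
        field_simp
      calc (1 + (r - u)) ^ N ≤ (((N : ℝ) / lam) * (1 + lam * (r - u) / N)) ^ N := hb2
        _ = ((N : ℝ) / lam) ^ N * (1 + lam * (r - u) / N) ^ N := mul_pow _ _ _
        _ ≤ ((N : ℝ) / lam) ^ N * Real.exp (lam * (r - u)) := by
            apply mul_le_mul_of_nonneg_left hb3 (by positivity)
    have hua : 0 ≤ u ^ a := Real.rpow_nonneg hu0.le a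
    calc r ^ a = u ^ a * (r / u) ^ a := hsplit
      _ ≤ u ^ a * (((N : ℝ) / lam) ^ N * Real.exp (lam * (r - u))) := by
          apply mul_le_mul_of_nonneg_left _ hua
          calc (r / u) ^ a ≤ (r / u) ^ (N:ℝ) := h1
            _ = (r / u) ^ N := h2
            _ ≤ (1 + (r - u)) ^ N := h4
            _ ≤ ((N : ℝ) / lam) ^ N * Real.exp (lam * (r - u)) := h5
      _ = ((N : ℝ) / lam) ^ N * u ^ a * Real.exp (lam * (r - u)) := by ring

lemma key_bound (c Cstar tstar : ℝ) (hC : 0 < Cstar) (htstar : 1 ≤ tstar) :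
    ∃ B : ℝ, 0 < B ∧ ∀ t : ℝ, tstar ≤ t →
      (∫ u in tstar..t, ∫ s in u..t, ∫ w in s..t, ∫ r in w..t,
        r ^ (c - 2) * s ^ (2 * c - 2) * w ^ (c - 2) *
          Real.exp (-Cstar * r + 2 * Cstar * u - Cstar * s))
      ≤ B * ∫ u in tstar..t, u ^ (4 * c - 6) := by
  set lam := Cstar / 4 with hlamdef
  have hlam : 0 < lam := by positivity
  have hC4 : Cstar = 4 * lam := by rw [hlamdef]; ring
  obtain ⟨C1, hC1, hB1⟩ := poly_exp_bound (c - 2) lam hlam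
  obtain ⟨C2, hC2, hB2⟩ := poly_exp_bound (2 * c - 2) lam hlam
  have hC10 : 0 < C1 := lt_of_lt_of_le one_pos hC1
  have hC20 : 0 < C2 := lt_of_lt_of_le one_pos hC2
  set A := C1 * C1 * C2 with hA
  have hA0 : 0 < A := by positivity
  refine ⟨A / (20 * lam ^ 3), by positivity, fun t ht => ?_⟩
  have htt : 1 ≤ t := le_trans htstar ht
  -- pointwise bound on the integrand
  have step0 : ∀ u s w r : ℝ, tstar ≤ u → u ≤ s → s ≤ w → w ≤ r →
      r ^ (c - 2) * s ^ (2 * c - 2) * w ^ (c - 2) *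
        Real.exp (-Cstar * r + 2 * Cstar * u - Cstar * s)
      ≤ A * u ^ (4 * c - 6) * Real.exp (-(3 * lam * (s - u))) *
          Real.exp (-(2 * lam * (r - u))) := by
    intro u s w r hu hus hsw hwr
    have h1u : 1 ≤ u := le_trans htstar hu
    have hu0 : 0 < u := lt_of_lt_of_le one_pos h1u
    have hs0 : 0 < s := lt_of_lt_of_le hu0 hus
    have hw0 : 0 < w := lt_of_lt_of_le hs0 hsw
    have hr0 : 0 < r := lt_of_lt_of_le hw0 hwr
    have h1 := hB1 u r h1u (by linarith)
    have h2 := hB2 u s h1u hus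
    have h3 : w ^ (c - 2) ≤ C1 * u ^ (c - 2) * Real.exp (lam * (r - u)) := by
      refine le_trans (hB1 u w h1u (by linarith)) ?_
      have hle : Real.exp (lam * (w - u)) ≤ Real.exp (lam * (r - u)) :=
        Real.exp_le_exp.mpr (by nlinarith)
      have hpos : 0 ≤ C1 * u ^ (c - 2) := by
        have := Real.rpow_nonneg hu0.le (c - 2); positivity
      exact mul_le_mul_of_nonneg_left hle hpos
    have hmul : r ^ (c-2) * s ^ (2*c-2) * w ^ (c-2) ≤
        (C1 * u ^ (c-2) * Real.exp (lam * (r-u))) *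
          (C2 * u ^ (2*c-2) * Real.exp (lam * (s-u))) *
          (C1 * u ^ (c-2) * Real.exp (lam * (r-u))) := by
      have n1 : 0 ≤ s ^ (2*c-2) := Real.rpow_nonneg hs0.le _
      have n2 : 0 ≤ w ^ (c-2) := Real.rpow_nonneg hw0.le _
      have n3 : 0 ≤ r ^ (c-2) := Real.rpow_nonneg hr0.le _
      have n4 : 0 ≤ C1 * u ^ (c-2) * Real.exp (lam * (r-u)) := by
        have := Real.rpow_nonneg hu0.le (c-2); positivity
      have n5 : 0 ≤ C2 * u ^ (2*c-2) * Real.exp (lam * (s-u)) := by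
        have := Real.rpow_nonneg hu0.le (2*c-2); positivity
      have step : r ^ (c-2) * s ^ (2*c-2) ≤
          (C1 * u ^ (c-2) * Real.exp (lam * (r-u))) *
            (C2 * u ^ (2*c-2) * Real.exp (lam * (s-u))) :=
        mul_le_mul h1 h2 n1 n4
      exact mul_le_mul step h3 n2 (mul_nonneg n4 n5)
    have hE : (0:ℝ) < Real.exp (-Cstar * r + 2 * Cstar * u - Cstar * s) := Real.exp_pos _
    calc r ^ (c-2) * s ^ (2*c-2) * w ^ (c-2) *
          Real.exp (-Cstar * r + 2 * Cstar * u - Cstar * s)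
        ≤ (C1 * u ^ (c-2) * Real.exp (lam * (r-u))) *
            (C2 * u ^ (2*c-2) * Real.exp (lam * (s-u))) *
            (C1 * u ^ (c-2) * Real.exp (lam * (r-u))) *
            Real.exp (-Cstar * r + 2 * Cstar * u - Cstar * s) :=
          mul_le_mul_of_nonneg_right hmul hE.le
      _ = A * (u ^ (c-2) * u ^ (2*c-2) * u ^ (c-2)) *
            Real.exp (lam * (r-u) + lam * (s-u) + lam * (r-u) +
              (-Cstar * r + 2 * Cstar * u - Cstar * s)) := by
          rw [Real.exp_add, Real.exp_add, Real.exp_add]; ring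
      _ = A * u ^ (4 * c - 6) * Real.exp (-(3 * lam * (s - u))) *
            Real.exp (-(2 * lam * (r - u))) := by
          rw [← Real.rpow_add hu0, ← Real.rpow_add hu0]
          have e1 : (c - 2) + (2*c - 2) + (c - 2) = 4 * c - 6 := by ring
          have e2 : lam * (r-u) + lam * (s-u) + lam * (r-u) +
              (-Cstar * r + 2 * Cstar * u - Cstar * s)
              = -(3 * lam * (s - u)) + -(2 * lam * (r - u)) := by
            rw [hC4]; ring
          rw [e1, e2, Real.exp_add]; ring
  -- nonnegativity of the integrand
  have nn0 : ∀ u s w r : ℝ, 0 ≤ u → u ≤ s → s ≤ w → w ≤ r →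
      0 ≤ r ^ (c - 2) * s ^ (2 * c - 2) * w ^ (c - 2) *
        Real.exp (-Cstar * r + 2 * Cstar * u - Cstar * s) := by
    intro u s w r hu hus hsw hwr
    have hs0 : 0 ≤ s := le_trans hu hus
    have hw0 : 0 ≤ w := le_trans hs0 hsw
    have hr0 : 0 ≤ r := le_trans hw0 hwr
    exact mul_nonneg (mul_nonneg (mul_nonneg (Real.rpow_nonneg hr0 _)
      (Real.rpow_nonneg hs0 _)) (Real.rpow_nonneg hw0 _)) (Real.exp_nonneg _)
  -- step 1: integrate in r
  have step1 : ∀ u s w : ℝ, tstar ≤ u → u ≤ s → s ≤ w → w ≤ t →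
      (∫ r in w..t, r ^ (c - 2) * s ^ (2 * c - 2) * w ^ (c - 2) *
          Real.exp (-Cstar * r + 2 * Cstar * u - Cstar * s))
      ≤ (A * u ^ (4 * c - 6) * Real.exp (-(3 * lam * (s - u)))) *
          (Real.exp (-(2 * lam * (w - u))) / (2 * lam)) := by
    intro u s w hu hus hsw hwt
    have h1u : 1 ≤ u := le_trans htstar hu
    have hu0 : 0 < u := lt_of_lt_of_le one_pos h1u
    have hKnn : 0 ≤ A * u ^ (4 * c - 6) * Real.exp (-(3 * lam * (s - u))) := by
      have := Real.rpow_nonneg hu0.le (4*c-6); positivity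
    have key1 : (∫ r in w..t, r ^ (c - 2) * s ^ (2 * c - 2) * w ^ (c - 2) *
          Real.exp (-Cstar * r + 2 * Cstar * u - Cstar * s))
        ≤ ∫ r in w..t, (A * u ^ (4 * c - 6) * Real.exp (-(3 * lam * (s - u)))) *
            Real.exp (-(2 * lam * (r - u))) := by
      apply integral_le_of_le' hwt
      · exact (continuous_const.mul (exp_shift_cont (2*lam) u)).intervalIntegrable _ _
      · intro x hx
        exact nn0 u s w x (by linarith) hus hsw hx.1
      · intro x hx
        exact step0 u s w x hu hus hsw hx.1
    refine key1.trans ?_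
    rw [intervalIntegral.integral_const_mul]
    exact mul_le_mul_of_nonneg_left (exp_shift_integral_le (2*lam) u w t (by positivity)) hKnn
  -- step 2: integrate in w
  have step2 : ∀ u s : ℝ, tstar ≤ u → u ≤ s → s ≤ t →
      (∫ w in s..t, ∫ r in w..t, r ^ (c - 2) * s ^ (2 * c - 2) * w ^ (c - 2) *
          Real.exp (-Cstar * r + 2 * Cstar * u - Cstar * s))
      ≤ (A * u ^ (4 * c - 6) * Real.exp (-(3 * lam * (s - u))) / (2 * lam)) *
          (Real.exp (-(2 * lam * (s - u))) / (2 * lam)) := by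
    intro u s hu hus hst
    have h1u : 1 ≤ u := le_trans htstar hu
    have hu0 : 0 < u := lt_of_lt_of_le one_pos h1u
    have hKnn : 0 ≤ A * u ^ (4 * c - 6) * Real.exp (-(3 * lam * (s - u))) / (2 * lam) := by
      have := Real.rpow_nonneg hu0.le (4*c-6); positivity
    have key2 : (∫ w in s..t, ∫ r in w..t, r ^ (c - 2) * s ^ (2 * c - 2) * w ^ (c - 2) *
          Real.exp (-Cstar * r + 2 * Cstar * u - Cstar * s))
        ≤ ∫ w in s..t, (A * u ^ (4 * c - 6) * Real.exp (-(3 * lam * (s - u))) / (2 * lam)) *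
            Real.exp (-(2 * lam * (w - u))) := by
      apply integral_le_of_le' hst
      · exact (continuous_const.mul (exp_shift_cont (2*lam) u)).intervalIntegrable _ _
      · intro w hw
        exact intervalIntegral.integral_nonneg hw.2
          (fun r hr => nn0 u s w r (by linarith) hus hw.1 hr.1)
      · intro w hw
        exact (step1 u s w hu hus hw.1 hw.2).trans (le_of_eq (by ring))
    refine key2.trans ?_
    rw [intervalIntegral.integral_const_mul]
    exact mul_le_mul_of_nonneg_left (exp_shift_integral_le (2*lam) u s t (by positivity)) hKnn
  -- step 3: integrate in s
  have step3 : ∀ u : ℝ, tstar ≤ u → u ≤ t →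
      (∫ s in u..t, ∫ w in s..t, ∫ r in w..t, r ^ (c - 2) * s ^ (2 * c - 2) * w ^ (c - 2) *
          Real.exp (-Cstar * r + 2 * Cstar * u - Cstar * s))
      ≤ A / (20 * lam ^ 3) * u ^ (4 * c - 6) := by
    intro u hu hut
    have h1u : 1 ≤ u := le_trans htstar hu
    have hu0 : 0 < u := lt_of_lt_of_le one_pos h1u
    have hupow : 0 ≤ u ^ (4*c-6) := Real.rpow_nonneg hu0.le _
    have hKnn : 0 ≤ A * u ^ (4 * c - 6) / (4 * lam ^ 2) := by positivity
    have key3 : (∫ s in u..t, ∫ w in s..t, ∫ r in w..t,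
          r ^ (c - 2) * s ^ (2 * c - 2) * w ^ (c - 2) *
            Real.exp (-Cstar * r + 2 * Cstar * u - Cstar * s))
        ≤ ∫ s in u..t, (A * u ^ (4 * c - 6) / (4 * lam ^ 2)) *
            Real.exp (-(5 * lam * (s - u))) := by
      apply integral_le_of_le' hut
      · exact (continuous_const.mul (exp_shift_cont (5*lam) u)).intervalIntegrable _ _
      · intro s hs
        apply intervalIntegral.integral_nonneg hs.2
        intro w hw
        exact intervalIntegral.integral_nonneg hw.2
          (fun r hr => nn0 u s w r (by linarith) hs.1 hw.1 hr.1)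
      · intro s hs
        refine (step2 u s hu hs.1 hs.2).trans (le_of_eq ?_)
        have hexp : Real.exp (-(3*lam*(s-u))) * Real.exp (-(2*lam*(s-u)))
            = Real.exp (-(5*lam*(s-u))) := by
          rw [← Real.exp_add]; congr 1; ring
        rw [← hexp]; ring
    refine key3.trans ?_
    rw [intervalIntegral.integral_const_mul]
    have hle := exp_shift_integral_le (5*lam) u u t (by positivity)
    refine (mul_le_mul_of_nonneg_left hle hKnn).trans (le_of_eq ?_)
    have : u - u = 0 := sub_self u
    rw [this, mul_zero, neg_zero, Real.exp_zero]
    field_simp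
    ring
  -- step 4: integrate in u
  rw [← intervalIntegral.integral_const_mul]
  apply integral_le_of_le' ht
  · have hcont : ContinuousOn (fun u : ℝ => u ^ (4*c-6)) (Set.uIcc tstar t) := by
      apply ContinuousOn.rpow_const continuousOn_id
      intro x hx
      rw [Set.uIcc_of_le ht] at hx
      have : (1:ℝ) ≤ x := le_trans htstar hx.1
      exact Or.inl (show (0:ℝ) < x by linarith).ne'
    exact (continuousOn_const.mul hcont).intervalIntegrable
  · intro u hu
    apply intervalIntegral.integral_nonneg hu.2
    intro s hs
    apply intervalIntegral.integral_nonneg hs.2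
    intro w hw
    exact intervalIntegral.integral_nonneg hw.2
      (fun r hr => nn0 u s w r (by linarith [hu.1]) hs.1 hw.1 hr.1)
  · intro u hu
    exact step3 u hu.1 hu.2

/-- The quantity `I₄(t)` from Lemma 5.5: a fourfold iterated integral over the
ordered region `t* ≤ u ≤ s ≤ w ≤ r ≤ t`, scaled by `t^{-4c}`. -/
noncomputable def I4 (c Cstar tstar t : ℝ) : ℝ :=
  t ^ (-(4 * c)) *
    ∫ u in tstar..t, ∫ s in u..t, ∫ w in s..t, ∫ r in w..t,
      r ^ (c - 2) * s ^ (2 * c - 2) * w ^ (c - 2) *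
        Real.exp (-Cstar * r + 2 * Cstar * u - Cstar * s)

/-- Lemma 5.5 of the paper. -/
theorem stmt_3 (c Cstar tstar : ℝ) (hc : 1 / 2 < c) (hC : 0 < Cstar)
    (htstar : 1 ≤ tstar) :
    ∃ K : ℝ, 0 < K ∧ ∀ t : ℝ, tstar ≤ t →
      (5 / 4 < c → I4 c Cstar tstar t ≤ K / t ^ 5) ∧
      (c = 5 / 4 → I4 c Cstar tstar t ≤ K * (1 + Real.log t) / t ^ 5) ∧
      (c < 5 / 4 → I4 c Cstar tstar t ≤ K / t ^ (4 * c)) := by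
  obtain ⟨B, hB, hkey⟩ := key_bound c Cstar tstar hC htstar
  have hts0 : (0:ℝ) < tstar := lt_of_lt_of_le one_pos htstar
  rcases lt_trichotomy c (5/4) with hcase | hcase | hcase
  · -- c < 5/4
    have h54 : 0 < 5 - 4*c := by linarith
    have htsp : 0 < tstar ^ (4*c-5) := Real.rpow_pos_of_pos hts0 _
    refine ⟨B * (tstar ^ (4*c-5) / (5-4*c)), by positivity, fun t ht => ?_⟩
    have ht0 : (0:ℝ) < t := lt_of_lt_of_le hts0 ht
    refine ⟨fun h => ((by linarith : False)).elim,
            fun h => ((by rw [h] at hcase; linarith : False)).elim, fun _ => ?_⟩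
    have hmem : (0:ℝ) ∉ Set.uIcc tstar t := by
      rw [Set.uIcc_of_le ht]
      rintro ⟨h1, h2⟩; linarith
    have hP : (∫ u in tstar..t, u ^ (4*c-6))
        = (tstar ^ (4*c-5) - t ^ (4*c-5)) / (5-4*c) := by
      rw [integral_rpow (Or.inr ⟨by intro hcon; linarith [hcon], hmem⟩)]
      rw [show (4*c-6+1) = 4*c-5 by ring]
      rw [div_eq_div_iff (by linarith) (by linarith)]
      ring
    have hPle : (∫ u in tstar..t, u ^ (4*c-6)) ≤ tstar ^ (4*c-5) / (5-4*c) := by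
      rw [hP]
      have := Real.rpow_nonneg ht0.le (4*c-5)
      exact (div_le_div_iff_of_pos_right h54).mpr (by linarith)
    have h1 : I4 c Cstar tstar t ≤ t ^ (-(4*c)) * (B * (tstar ^ (4*c-5) / (5-4*c))) := by
      simp only [I4]
      apply mul_le_mul_of_nonneg_left _ (Real.rpow_nonneg ht0.le _)
      exact (hkey t ht).trans (mul_le_mul_of_nonneg_left hPle hB.le)
    refine h1.trans (le_of_eq ?_)
    rw [Real.rpow_neg ht0.le, inv_mul_eq_div]
  · -- c = 5/4
    subst hcase
    refine ⟨B, hB, fun t ht => ?_⟩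
    have ht0 : (0:ℝ) < t := lt_of_lt_of_le hts0 ht
    have ht1 : (1:ℝ) ≤ t := le_trans htstar ht
    refine ⟨fun h => absurd h (lt_irrefl _), fun _ => ?_, fun h => absurd h (lt_irrefl _)⟩
    have hmem : (0:ℝ) ∉ Set.uIcc tstar t := by
      rw [Set.uIcc_of_le ht]
      rintro ⟨h1, h2⟩; linarith
    have hP : (∫ u in tstar..t, u ^ (4*(5/4:ℝ)-6)) = Real.log t - Real.log tstar := by
      have h41 : (4*(5/4:ℝ)-6) = -1 := by norm_num
      simp only [h41, Real.rpow_neg_one]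
      rw [integral_inv hmem, Real.log_div ht0.ne' hts0.ne']
    have hlogts : 0 ≤ Real.log tstar := Real.log_nonneg htstar
    have hlogt : 0 ≤ Real.log t := Real.log_nonneg ht1
    have hPle : (∫ u in tstar..t, u ^ (4*(5/4:ℝ)-6)) ≤ 1 + Real.log t := by
      rw [hP]; linarith
    have hpow : t ^ (-(4*(5/4:ℝ))) = (t^5)⁻¹ := by
      rw [show -(4*(5/4:ℝ)) = -5 by norm_num, Real.rpow_neg ht0.le,
        show (5:ℝ) = ((5:ℕ):ℝ) by norm_num, Real.rpow_natCast]
    have h1 : I4 (5/4) Cstar tstar t ≤ (t^5)⁻¹ * (B * (1 + Real.log t)) := by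
      simp only [I4, hpow]
      apply mul_le_mul_of_nonneg_left _ (by positivity)
      exact (hkey t ht).trans (mul_le_mul_of_nonneg_left hPle hB.le)
    refine h1.trans (le_of_eq ?_)
    rw [inv_mul_eq_div]
  · -- 5/4 < c
    have h45 : 0 < 4*c - 5 := by linarith
    refine ⟨B / (4*c-5), by positivity, fun t ht => ?_⟩
    have ht0 : (0:ℝ) < t := lt_of_lt_of_le hts0 ht
    refine ⟨fun _ => ?_, fun h => ((by rw [h] at hcase; linarith : False)).elim,
            fun h => ((by linarith : False)).elim⟩
    have hP : (∫ u in tstar..t, u ^ (4*c-6))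
        = (t ^ (4*c-5) - tstar ^ (4*c-5)) / (4*c-5) := by
      rw [integral_rpow (Or.inl (by linarith))]
      rw [show (4*c-6+1) = 4*c-5 by ring]
    have hPle : (∫ u in tstar..t, u ^ (4*c-6)) ≤ t ^ (4*c-5) / (4*c-5) := by
      rw [hP]
      have := Real.rpow_nonneg hts0.le (4*c-5)
      exact (div_le_div_iff_of_pos_right h45).mpr (by linarith)
    have h1 : I4 c Cstar tstar t ≤ t ^ (-(4*c)) * (B * (t ^ (4*c-5) / (4*c-5))) := by
      simp only [I4]
      apply mul_le_mul_of_nonneg_left _ (Real.rpow_nonneg ht0.le _)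
      exact (hkey t ht).trans (mul_le_mul_of_nonneg_left hPle hB.le)
    refine h1.trans (le_of_eq ?_)
    have hcomb : t ^ (-(4*c)) * t ^ (4*c-5) = (t^5)⁻¹ := by
      rw [← Real.rpow_add ht0, show -(4*c)+(4*c-5) = -5 by ring, Real.rpow_neg ht0.le,
        show (5:ℝ) = ((5:ℕ):ℝ) by norm_num, Real.rpow_natCast]
    calc t ^ (-(4*c)) * (B * (t ^ (4*c-5) / (4*c-5)))
        = (B / (4*c-5)) * (t ^ (-(4*c)) * t ^ (4*c-5)) := by ring
      _ = (B / (4*c-5)) * (t^5)⁻¹ := by rw [hcomb]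
      _ = B / (4*c-5) / t^5 := by rw [← div_eq_mul_inv]
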